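/- Assume moreover that 1 < β ≤ G, where G = (1+√5)/2 is the golden mean. Then for every n ≥ 1 one has κ(n) ≤ 2^{⌊n/2⌋+1}. -/

import Mathlib

open MeasureTheory Set

/-- The greedy β-transformation with deleted digit set `{0, a₁, a₂}`:
`T x = βx` on `Δ(0) = [0, a₁/β)`, `T x = βx − a₁` on `Δ(a₁) = [a₁/β, a₂/β)`,
and `T x = βx − a₂` on `Δ(a₂) = [a₂/β, a₁)`. -/
noncomputable def greedyT (β a₁ a₂ : ℝ) (x : ℝ) : ℝ :=
  if x < a₁ / β then β * x
  else if x < a₂ / β then β * x - a₁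
  else β * x - a₂

/-- The interval `Δ(b)` associated to a digit `b ∈ {0, a₁, a₂}`. -/
noncomputable def digitInt (β a₁ a₂ : ℝ) (b : ℝ) : Set ℝ :=
  if b = 0 then Set.Ico 0 (a₁ / β)
  else if b = a₁ then Set.Ico (a₁ / β) (a₂ / β)
  else Set.Ico (a₂ / β) a₁

/-- The fundamental interval `Δ(w) = ⋂_{k < n} T⁻ᵏ Δ(b_k)` of a word
`w = (b₀, …, b_{n−1})`. -/
noncomputable def cyl (β a₁ a₂ : ℝ) (w : List ℝ) : Set ℝ :=
  ⋂ k ∈ Finset.range w.length,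
    (greedyT β a₁ a₂)^[k] ⁻¹' digitInt β a₁ a₂ (w.getD k 0)

/-- `w` is a word over the alphabet `A = {0, a₁, a₂}`. -/
def isWord (a₁ a₂ : ℝ) (w : List ℝ) : Prop := ∀ b ∈ w, b = 0 ∨ b = a₁ ∨ b = a₂

/-- The fundamental interval `Δ(w)` is full: `λ(Δ(w)) = a₁/β^|w|`. -/
def isFull (β a₁ a₂ : ℝ) (w : List ℝ) : Prop :=
  volume (cyl β a₁ a₂ w) = ENNReal.ofReal (a₁ / β ^ w.length)

/-- Condition (6): `a₁ · max (β−1) 1 < a₂ < a₁ · min 2 β`. -/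
def condition6 (β a₁ a₂ : ℝ) : Prop :=
  a₁ * max (β - 1) 1 < a₂ ∧ a₂ < a₁ * min 2 β

/-- `w ∈ Bₙ`: `w` is a word of length `n` over `A` with `λ(Δ(w)) > 0`, `Δ(w)`
non-full, and `Δ(w′)` non-full for every nonempty proper prefix `w′` of `w`. -/
def memB (β a₁ a₂ : ℝ) (n : ℕ) (w : List ℝ) : Prop :=
  w.length = n ∧ isWord a₁ a₂ w ∧ 0 < volume (cyl β a₁ a₂ w) ∧
    ¬ isFull β a₁ a₂ w ∧
    ∀ w' : List ℝ, w' ≠ [] → w' <+: w → w' ≠ w → ¬ isFull β a₁ a₂ w'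

/-- `κ(n)`: the number of elements of `Bₙ`. -/
noncomputable def kappa (β a₁ a₂ : ℝ) (n : ℕ) : ℕ :=
  {w : List ℝ | memB β a₁ a₂ n w}.ncard

set_option linter.unusedSectionVars false
set_option linter.unusedVariables false
set_option linter.unusedTactic false

structure Ctx (β a₁ a₂ : ℝ) : Prop where
  hβ1 : 1 < β
  hβ2 : β < 2
  gold : β ^ 2 ≤ β + 1
  ha₁ : 0 < a₁
  h12 : a₁ < a₂
  hba : a₂ < β * a₁
  h2a : a₂ < 2 * a₁
  hm : a₁ * (β - 1) < a₂

namespace Ctx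
variable {β a₁ a₂ : ℝ} (hC : Ctx β a₁ a₂)
include hC

lemma hβ0 : (0:ℝ) < β := lt_trans one_pos hC.hβ1
lemma ha₂ : 0 < a₂ := lt_trans hC.ha₁ hC.h12
lemma hq1 : 0 < a₁ / β := div_pos hC.ha₁ hC.hβ0
lemma hq12 : a₁ / β < a₂ / β := by
  apply div_lt_div_of_pos_right hC.h12 hC.hβ0
lemma hq2a : a₂ / β < a₁ := by
  rw [div_lt_iff₀ hC.hβ0]; linarith [hC.hba]
lemma ha₁0 : a₁ ≠ 0 := ne_of_gt hC.ha₁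
lemma ha₂0 : a₂ ≠ 0 := ne_of_gt hC.ha₂
lemma ha₂1 : a₂ ≠ a₁ := ne_of_gt hC.h12
end Ctx

noncomputable def LL (β a₁ a₂ b : ℝ) : ℝ :=
  if b = 0 then 0 else if b = a₁ then a₁ / β else a₂ / β
noncomputable def RR (β a₁ a₂ b : ℝ) : ℝ :=
  if b = 0 then a₁ / β else if b = a₁ then a₂ / β else a₁

section Basic
variable {β a₁ a₂ : ℝ} (hC : Ctx β a₁ a₂)
include hC

omit hC in
lemma LL0 : LL β a₁ a₂ 0 = 0 := by simp [LL]
lemma LL1 : LL β a₁ a₂ a₁ = a₁ / β := by simp [LL, hC.ha₁0]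
lemma LL2 : LL β a₁ a₂ a₂ = a₂ / β := by simp [LL, hC.ha₂0, hC.ha₂1]
omit hC in
lemma RR0 : RR β a₁ a₂ 0 = a₁ / β := by simp [RR]
lemma RR1 : RR β a₁ a₂ a₁ = a₂ / β := by simp [RR, hC.ha₁0]
lemma RR2 : RR β a₁ a₂ a₂ = a₁ := by simp [RR, hC.ha₂0, hC.ha₂1]
omit hC in
lemma dg0 : digitInt β a₁ a₂ 0 = Ico 0 (a₁ / β) := by simp [digitInt]
lemma dg1 : digitInt β a₁ a₂ a₁ = Ico (a₁ / β) (a₂ / β) := by simp [digitInt, hC.ha₁0]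
lemma dg2 : digitInt β a₁ a₂ a₂ = Ico (a₂ / β) a₁ := by simp [digitInt, hC.ha₂0, hC.ha₂1]

lemma digit_eq {b : ℝ} (hb : b = 0 ∨ b = a₁ ∨ b = a₂) :
    digitInt β a₁ a₂ b = Ico (LL β a₁ a₂ b) (RR β a₁ a₂ b) := by
  rcases hb with hb | hb | hb <;> rw [hb]
  · rw [dg0, LL0, RR0]
  · rw [(dg1 hC), (LL1 hC), (RR1 hC)]
  · rw [(dg2 hC), (LL2 hC), (RR2 hC)]

lemma LL_eq {b : ℝ} (hb : b = 0 ∨ b = a₁ ∨ b = a₂) : LL β a₁ a₂ b = b / β := by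
  rcases hb with hb | hb | hb <;> rw [hb]
  · rw [LL0]; simp
  · exact (LL1 hC)
  · exact (LL2 hC)

lemma LL_nonneg {b : ℝ} (hb : b = 0 ∨ b = a₁ ∨ b = a₂) : 0 ≤ LL β a₁ a₂ b := by
  rcases hb with hb | hb | hb <;> rw [hb]
  · rw [LL0]
  · rw [(LL1 hC)]; exact le_of_lt hC.hq1
  · rw [(LL2 hC)]; exact le_of_lt (div_pos hC.ha₂ hC.hβ0)

lemma width_le {b : ℝ} (hb : b = 0 ∨ b = a₁ ∨ b = a₂) :
    β * (RR β a₁ a₂ b - LL β a₁ a₂ b) ≤ a₁ := by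
  have hβ0 := hC.hβ0
  have h2a := hC.h2a
  have hm := hC.hm
  rcases hb with hb | hb | hb <;> rw [hb]
  · rw [RR0, LL0]
    have : β * (a₁ / β - 0) = a₁ := by field_simp; ring
    linarith
  · rw [(RR1 hC), (LL1 hC)]
    have : β * (a₂ / β - a₁ / β) = a₂ - a₁ := by field_simp
    linarith
  · rw [(RR2 hC), (LL2 hC)]
    have : β * (a₁ - a₂ / β) = β * a₁ - a₂ := by field_simp
    linarith

lemma T_on {b y : ℝ} (hb : b = 0 ∨ b = a₁ ∨ b = a₂)
    (hy : y ∈ Ico (LL β a₁ a₂ b) (RR β a₁ a₂ b)) : greedyT β a₁ a₂ y = β * y - b := by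
  obtain ⟨h1, h2⟩ := hy
  rcases hb with hb | hb | hb <;> rw [hb] <;> rw [hb] at h1 h2
  · rw [LL0] at h1; rw [RR0] at h2
    rw [greedyT, if_pos h2]; ring
  · rw [(LL1 hC)] at h1; rw [(RR1 hC)] at h2
    rw [greedyT, if_neg (not_lt.mpr h1), if_pos h2]
  · rw [(LL2 hC)] at h1; rw [(RR2 hC)] at h2
    rw [greedyT, if_neg, if_neg (not_lt.mpr h1)]
    exact not_lt.mpr (le_trans (le_of_lt (hC.hq12)) h1)

end Basic

section Cyl
variable {β a₁ a₂ : ℝ}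

lemma cyl_single (b : ℝ) : cyl β a₁ a₂ [b] = digitInt β a₁ a₂ b := by
  simp [cyl]

lemma cyl_append (u : List ℝ) (b : ℝ) :
    cyl β a₁ a₂ (u ++ [b]) =
      cyl β a₁ a₂ u ∩ (greedyT β a₁ a₂)^[u.length] ⁻¹' digitInt β a₁ a₂ b := by
  rw [cyl, cyl]
  have hlen : (u ++ [b]).length = u.length + 1 := by simp
  rw [hlen, Finset.range_add_one, Finset.set_biInter_insert]
  rw [inter_comm]
  congr 1
  · apply Set.iInter₂_congr
    intro k hk
    rw [List.getD_append u [b] 0 k (by simpa using hk)]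
  · congr 1
    rw [List.getD_append_right u [b] 0 u.length le_rfl]
    simp

lemma cyl_take_subset (w : List ℝ) (n : ℕ) :
    cyl β a₁ a₂ w ⊆ cyl β a₁ a₂ (w.take n) := by
  intro x hx
  rw [cyl] at hx ⊢
  simp only [mem_iInter, Finset.mem_range] at hx ⊢
  intro k hk
  rw [List.length_take] at hk
  have hk1 : k < n := lt_of_lt_of_le hk (min_le_left _ _)
  have hk2 : k < w.length := lt_of_lt_of_le hk (min_le_right _ _)
  have : (w.take n).getD k 0 = w.getD k 0 := by
    rw [List.getD_eq_getElem?_getD, List.getD_eq_getElem?_getD, List.getElem?_take,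
      if_pos hk1]
  rw [this]
  exact hx k hk2

/-- key algebra helper -/
lemma min_shift {c l r p q : ℝ} (hc : 0 < c) :
    min r (l + q / c) - (l + p / c) = (min (c * (r - l)) q - p) / c := by
  have h1 : min r (l + q / c) - l = min (r - l) (q / c) := by
    rw [← min_sub_sub_right]; ring_nf
  have h2 : min (c * (r - l)) q / c = min (r - l) (q / c) := by
    rw [← min_div_div_right hc.le]
    congr 1
    field_simp
  have : min r (l + q / c) - (l + p / c) = (min r (l + q / c) - l) - p / c := by ring
  rw [this, h1, sub_div, h2]

end Cyl

section Good
variable {β a₁ a₂ : ℝ} (hC : Ctx β a₁ a₂)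
include hC

lemma good_append {u : List ℝ} {b l r : ℝ} (hb : b = 0 ∨ b = a₁ ∨ b = a₂)
    (hcyl : cyl β a₁ a₂ u = Ico l r)
    (haff : ∀ x ∈ Ico l r, (greedyT β a₁ a₂)^[u.length] x = β ^ u.length * (x - l)) :
    cyl β a₁ a₂ (u ++ [b]) =
      Ico (l + LL β a₁ a₂ b / β ^ u.length) (min r (l + RR β a₁ a₂ b / β ^ u.length)) ∧
    ∀ x ∈ Ico (l + LL β a₁ a₂ b / β ^ u.length) (min r (l + RR β a₁ a₂ b / β ^ u.length)),
      (greedyT β a₁ a₂)^[(u ++ [b]).length] x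
        = β ^ (u ++ [b]).length * (x - (l + LL β a₁ a₂ b / β ^ u.length)) := by
  set n := u.length with hn
  have hpow : (0:ℝ) < β ^ n := pow_pos hC.hβ0 n
  have hLn : 0 ≤ LL β a₁ a₂ b := LL_nonneg hC hb
  -- membership characterization
  have hmem : ∀ x : ℝ, x ∈ cyl β a₁ a₂ (u ++ [b]) ↔
      (x ∈ Ico l r ∧ β ^ n * (x - l) ∈ Ico (LL β a₁ a₂ b) (RR β a₁ a₂ b)) := by
    intro x
    rw [cyl_append, hcyl, digit_eq hC hb]
    simp only [mem_inter_iff, mem_preimage]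
    constructor
    · rintro ⟨h1, h2⟩
      exact ⟨h1, by rwa [haff x h1] at h2⟩
    · rintro ⟨h1, h2⟩
      exact ⟨h1, by rwa [haff x h1]⟩
  have hset : cyl β a₁ a₂ (u ++ [b]) =
      Ico (l + LL β a₁ a₂ b / β ^ n) (min r (l + RR β a₁ a₂ b / β ^ n)) := by
    ext x
    rw [hmem x]
    simp only [mem_Ico, lt_min_iff]
    constructor
    · rintro ⟨⟨h1, h2⟩, h3, h4⟩
      refine ⟨?_, h2, ?_⟩
      · have : LL β a₁ a₂ b / β ^ n ≤ x - l := (div_le_iff₀ hpow).mpr (by linarith)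
        linarith
      · have : x - l < RR β a₁ a₂ b / β ^ n := (lt_div_iff₀ hpow).mpr (by linarith)
        linarith
    · rintro ⟨h1, h2, h3⟩
      have hlx : l ≤ x := le_trans (by linarith [div_nonneg hLn hpow.le]) h1
      refine ⟨⟨hlx, h2⟩, ?_, ?_⟩
      · have : LL β a₁ a₂ b / β ^ n ≤ x - l := by linarith
        have := (div_le_iff₀ hpow).mp this
        linarith
      · have : x - l < RR β a₁ a₂ b / β ^ n := by linarith
        have := (lt_div_iff₀ hpow).mp this
        linarith
  refine ⟨hset, ?_⟩
  intro x hx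
  have hx' : x ∈ cyl β a₁ a₂ (u ++ [b]) := by rw [hset]; exact hx
  obtain ⟨hx1, hx2⟩ := (hmem x).mp hx'
  have hlen : (u ++ [b]).length = n + 1 := by simp [hn]
  rw [hlen, Function.iterate_succ_apply', haff x hx1, T_on hC hb hx2,
    LL_eq hC hb]
  have hβ0 : β ≠ 0 := ne_of_gt hC.hβ0
  have hpn : (β:ℝ) ^ n ≠ 0 := ne_of_gt hpow
  field_simp
  ring

lemma exists_good : ∀ (u : List ℝ), u ≠ [] → isWord a₁ a₂ u →
    ∃ l r : ℝ, cyl β a₁ a₂ u = Ico l r ∧ β ^ u.length * (r - l) ≤ a₁ ∧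
      ∀ x ∈ Ico l r, (greedyT β a₁ a₂)^[u.length] x = β ^ u.length * (x - l) := by
  intro u
  induction u using List.reverseRecOn with
  | nil => intro h; exact absurd rfl h
  | append_singleton u b IH =>
    intro _ hw
    have hb : b = 0 ∨ b = a₁ ∨ b = a₂ := hw b (by simp)
    rcases eq_or_ne u [] with rfl | hu
    · refine ⟨LL β a₁ a₂ b, RR β a₁ a₂ b, ?_, ?_, ?_⟩
      · rw [List.nil_append, cyl_single, digit_eq hC hb]
      · simpa using width_le hC hb
      · intro x hx
        simp only [List.nil_append, List.length_singleton, pow_one,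
          Function.iterate_one]
        rw [T_on hC hb hx, LL_eq hC hb]
        have hβ0 : β ≠ 0 := ne_of_gt hC.hβ0
        field_simp
    · obtain ⟨l, r, hcyl, hht, haff⟩ := IH hu (fun c hc => hw c (by simp [hc]))
      obtain ⟨hset, haff'⟩ := good_append hC hb hcyl haff
      set n := u.length with hn
      have hpow : (0:ℝ) < β ^ n := pow_pos hC.hβ0 n
      refine ⟨_, _, hset, ?_, haff'⟩
      have hlen : (u ++ [b]).length = n + 1 := by simp [hn]
      rw [hlen]
      have hsh : min r (l + RR β a₁ a₂ b / β ^ n) - (l + LL β a₁ a₂ b / β ^ n)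
          = (min (β ^ n * (r - l)) (RR β a₁ a₂ b) - LL β a₁ a₂ b) / β ^ n := min_shift hpow
      rw [hsh]
      have h1 : min (β ^ n * (r - l)) (RR β a₁ a₂ b) ≤ RR β a₁ a₂ b := min_le_right _ _
      have h2 : β * (RR β a₁ a₂ b - LL β a₁ a₂ b) ≤ a₁ := width_le hC hb
      have : β ^ (n + 1) * ((min (β ^ n * (r - l)) (RR β a₁ a₂ b) - LL β a₁ a₂ b) / β ^ n)
          = β * (min (β ^ n * (r - l)) (RR β a₁ a₂ b) - LL β a₁ a₂ b) := by
        rw [pow_succ]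
        field_simp
      rw [this]
      have := mul_le_mul_of_nonneg_left (sub_le_sub_right h1 (LL β a₁ a₂ b)) hC.hβ0.le
      linarith

end Good

section Adm
variable {β a₁ a₂ : ℝ} (hC : Ctx β a₁ a₂)
include hC

lemma extract_one {u : List ℝ} {l r c : ℝ} {n : ℕ} (hn : u.length = n)
    (hcyl : cyl β a₁ a₂ u = Ico l r)
    (haff : ∀ x ∈ Ico l r, (greedyT β a₁ a₂)^[u.length] x = β ^ u.length * (x - l))
    (hc : c = 0 ∨ c = a₁ ∨ c = a₂)
    (hpos : 0 < volume (cyl β a₁ a₂ (u ++ [c])))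
    (hnfc : ¬ isFull β a₁ a₂ (u ++ [c])) :
    0 < min (β ^ n * (r - l)) (RR β a₁ a₂ c) - LL β a₁ a₂ c ∧
      min (β ^ n * (r - l)) (RR β a₁ a₂ c) - LL β a₁ a₂ c ≠ a₁ / β := by
  subst hn
  set n := u.length with hn
  have hpow : (0:ℝ) < β ^ n := pow_pos hC.hβ0 n
  obtain ⟨hset1, haff1⟩ := good_append hC hc hcyl haff
  set X := min (β ^ n * (r - l)) (RR β a₁ a₂ c) - LL β a₁ a₂ c with hX
  have hw1 : min r (l + RR β a₁ a₂ c / β ^ n) - (l + LL β a₁ a₂ c / β ^ n) = X / β ^ n :=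
    min_shift hpow
  have hvol1 : volume (cyl β a₁ a₂ (u ++ [c])) = ENNReal.ofReal (X / β ^ n) := by
    rw [hset1, Real.volume_Ico, hw1]
  constructor
  · rw [hvol1] at hpos
    have := ENNReal.ofReal_pos.mp hpos
    exact (div_pos_iff_of_pos_right hpow).mp this
  · intro hcon
    apply hnfc
    unfold isFull
    rw [hvol1, hcon]
    congr 1
    have : (u ++ [c]).length = n + 1 := by simp [hn]
    rw [this, pow_succ]
    field_simp

lemma extract_two {u : List ℝ} {l r c d : ℝ} {n : ℕ} (hn : u.length = n)
    (hcyl : cyl β a₁ a₂ u = Ico l r)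
    (haff : ∀ x ∈ Ico l r, (greedyT β a₁ a₂)^[u.length] x = β ^ u.length * (x - l))
    (hc : c = 0 ∨ c = a₁ ∨ c = a₂) (hd : d = 0 ∨ d = a₁ ∨ d = a₂)
    (hnfc : ¬ isFull β a₁ a₂ (u ++ [c]))
    (hpos : 0 < volume (cyl β a₁ a₂ (u ++ [c, d])))
    (hnf : ¬ isFull β a₁ a₂ (u ++ [c, d])) :
    min (β ^ n * (r - l)) (RR β a₁ a₂ c) - LL β a₁ a₂ c ≠ a₁ / β ∧
    0 < min (β * (min (β ^ n * (r - l)) (RR β a₁ a₂ c) - LL β a₁ a₂ c)) (RR β a₁ a₂ d)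
        - LL β a₁ a₂ d ∧
    min (β * (min (β ^ n * (r - l)) (RR β a₁ a₂ c) - LL β a₁ a₂ c)) (RR β a₁ a₂ d)
        - LL β a₁ a₂ d ≠ a₁ / β := by
  subst hn
  set n := u.length with hn
  have hβ0 : (0:ℝ) < β := hC.hβ0
  have hpow : (0:ℝ) < β ^ n := pow_pos hβ0 n
  have hpow1 : (0:ℝ) < β ^ (n + 1) := pow_pos hβ0 (n + 1)
  obtain ⟨hset1, haff1⟩ := good_append hC hc hcyl haff
  set X := min (β ^ n * (r - l)) (RR β a₁ a₂ c) - LL β a₁ a₂ c with hX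
  set l₁ := l + LL β a₁ a₂ c / β ^ n with hl₁
  set r₁ := min r (l + RR β a₁ a₂ c / β ^ n) with hr₁
  have hw1 : r₁ - l₁ = X / β ^ n := min_shift hpow
  have hXne : X ≠ a₁ / β := by
    intro hcon
    apply hnfc
    unfold isFull
    rw [hset1, Real.volume_Ico]
    have : (u ++ [c]).length = n + 1 := by simp [hn]
    rw [this, hw1, hcon, pow_succ]
    congr 1
    field_simp
  have hlen1 : (u ++ [c]).length = n + 1 := by simp [hn]
  -- second append
  have hdecomp : u ++ [c, d] = (u ++ [c]) ++ [d] := by simp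
  obtain ⟨hset2, haff2⟩ := good_append hC hd hset1 haff1
  rw [hlen1] at hset2
  set Y := min (β ^ (n + 1) * (r₁ - l₁)) (RR β a₁ a₂ d) - LL β a₁ a₂ d with hY
  have hw2 : min r₁ (l₁ + RR β a₁ a₂ d / β ^ (n + 1)) - (l₁ + LL β a₁ a₂ d / β ^ (n + 1))
      = Y / β ^ (n + 1) := min_shift hpow1
  have hYX : β ^ (n + 1) * (r₁ - l₁) = β * X := by
    rw [hw1, pow_succ]
    field_simp
  have hvol2 : volume (cyl β a₁ a₂ (u ++ [c, d])) =
      ENNReal.ofReal (Y / β ^ (n + 1)) := by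
    rw [hdecomp, hset2, Real.volume_Ico, hw2]
  refine ⟨hXne, ?_, ?_⟩
  · rw [hvol2] at hpos
    have := ENNReal.ofReal_pos.mp hpos
    have := (div_pos_iff_of_pos_right hpow1).mp this
    rw [hY, hYX] at this
    exact this
  · intro hcon
    apply hnf
    unfold isFull
    rw [hvol2]
    have hYv : Y = a₁ / β := by rw [hY, hYX]; exact hcon
    rw [hYv]
    congr 1
    have : (u ++ [c, d]).length = n + 2 := by simp [hn]
    rw [this]
    have : β ^ (n + 2) = β ^ (n+1) * β := by ring
    rw [this]
    field_simp

end Adm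

/-- admissibility data of a two–letter extension, in real terms -/
def Adm2 (β a₁ a₂ h c d : ℝ) : Prop :=
  (c = 0 ∨ c = a₁ ∨ c = a₂) ∧ (d = 0 ∨ d = a₁ ∨ d = a₂) ∧
  (min h (RR β a₁ a₂ c) - LL β a₁ a₂ c ≠ a₁ / β) ∧
  (0 < min (β * (min h (RR β a₁ a₂ c) - LL β a₁ a₂ c)) (RR β a₁ a₂ d) - LL β a₁ a₂ d) ∧
  (min (β * (min h (RR β a₁ a₂ c) - LL β a₁ a₂ c)) (RR β a₁ a₂ d) - LL β a₁ a₂ d ≠ a₁ / β)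

lemma pigeon3 {x y z u v : ℝ} (hx : x = u ∨ x = v) (hy : y = u ∨ y = v)
    (hz : z = u ∨ z = v) : x = y ∨ x = z ∨ y = z := by
  rcases hx with h | h <;> rcases hy with h' | h' <;> rcases hz with h'' | h'' <;>
    first
      | exact Or.inl (h.trans h'.symm)
      | exact Or.inr (Or.inl (h.trans h''.symm))
      | exact Or.inr (Or.inr (h'.trans h''.symm))

section Real
variable {β a₁ a₂ : ℝ} (hC : Ctx β a₁ a₂)
include hC

/-- basic consequences of positivity/nonfullness of a one–letter refinement -/
lemma d_facts {t e : ℝ} (he : e = 0 ∨ e = a₁ ∨ e = a₂)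
    (hpos : 0 < min t (RR β a₁ a₂ e) - LL β a₁ a₂ e)
    (hne : min t (RR β a₁ a₂ e) - LL β a₁ a₂ e ≠ a₁ / β) :
    (e = 0 → t < a₁ / β) ∧ (e = a₁ → a₁ / β < t) ∧ (e = a₂ → a₂ / β < t) := by
  refine ⟨?_, ?_, ?_⟩
  · intro h0
    rw [h0, RR0, LL0, sub_zero] at hpos hne
    by_contra hcon
    push_neg at hcon
    exact hne (min_eq_right hcon)
  · intro h1
    rw [h1, RR1 hC, LL1 hC] at hpos
    have h2 : a₁ / β < min t (a₂ / β) := by linarith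
    exact lt_of_lt_of_le h2 (min_le_left _ _)
  · intro h2
    rw [h2, RR2 hC, LL2 hC] at hpos
    have h3 : a₂ / β < min t a₁ := by linarith
    exact lt_of_lt_of_le h3 (min_le_left _ _)

lemma adm2_Xpos {h c d : ℝ} (H : Adm2 β a₁ a₂ h c d) :
    0 < min h (RR β a₁ a₂ c) - LL β a₁ a₂ c := by
  obtain ⟨hc, hd, _, hY, _⟩ := H
  have hL : 0 ≤ LL β a₁ a₂ d := LL_nonneg hC hd
  have hmin : min (β * (min h (RR β a₁ a₂ c) - LL β a₁ a₂ c)) (RR β a₁ a₂ d)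
      ≤ β * (min h (RR β a₁ a₂ c) - LL β a₁ a₂ c) := min_le_left _ _
  nlinarith [hC.hβ0]

lemma adm2_cfacts {h c d : ℝ} (H : Adm2 β a₁ a₂ h c d) :
    (c = 0 → h < a₁ / β) ∧ (c = a₁ → a₁ / β < h) ∧ (c = a₂ → a₂ / β < h) :=
  d_facts hC H.1 (adm2_Xpos hC H) H.2.2.1

lemma adm2_dfacts {h c d : ℝ} (H : Adm2 β a₁ a₂ h c d) :
    (d = 0 → β * (min h (RR β a₁ a₂ c) - LL β a₁ a₂ c) < a₁ / β) ∧
    (d = a₁ → a₁ / β < β * (min h (RR β a₁ a₂ c) - LL β a₁ a₂ c)) ∧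
    (d = a₂ → a₂ / β < β * (min h (RR β a₁ a₂ c) - LL β a₁ a₂ c)) :=
  d_facts hC H.2.1 H.2.2.2.1 H.2.2.2.2

lemma t_le {h c : ℝ} (hc : c = a₁ ∨ c = a₂) (h1 : h < a₁) :
    β * (min h (RR β a₁ a₂ c) - LL β a₁ a₂ c) ≤ a₂ / β := by
  have hβ0 := hC.hβ0
  have hβ1 := hC.hβ1
  have hβ2 := hC.hβ2
  have ha₁ := hC.ha₁
  have h12 := hC.h12
  have h2a := hC.h2a
  rcases hc with hc | hc <;> rw [hc]
  · rw [RR1 hC, LL1 hC, le_div_iff₀ hβ0]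
    have h2' : β * (min h (a₂ / β) - a₁ / β) ≤ β * (a₂ / β - a₁ / β) :=
      mul_le_mul_of_nonneg_left (sub_le_sub_right (min_le_right _ _) _) hβ0.le
    have key : β * (a₂ / β - a₁ / β) = a₂ - a₁ := by field_simp
    have h3' : β * (min h (a₂ / β) - a₁ / β) * β ≤ (a₂ - a₁) * β := by
      rw [← key]; exact mul_le_mul_of_nonneg_right h2' hβ0.le
    nlinarith [mul_pos (sub_pos.mpr hβ1) (by linarith : (0:ℝ) < 2 * a₁ - a₂),
      mul_nonneg (by linarith : (0:ℝ) ≤ 2 - β) ha₁.le]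
  · rw [RR2 hC, LL2 hC, le_div_iff₀ hβ0]
    have h2' : β * (min h a₁ - a₂ / β) ≤ β * (a₁ - a₂ / β) :=
      mul_le_mul_of_nonneg_left (sub_le_sub_right (min_le_right _ _) _) hβ0.le
    have key : β * (a₁ - a₂ / β) = β * a₁ - a₂ := by field_simp
    have h3' : β * (min h a₁ - a₂ / β) * β ≤ (β * a₁ - a₂) * β := by
      rw [← key]; exact mul_le_mul_of_nonneg_right h2' hβ0.le
    nlinarith [mul_le_mul_of_nonneg_right hC.gold ha₁.le,
      mul_le_mul_of_nonneg_left h12.le (by linarith : (0:ℝ) ≤ β + 1)]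

lemma adm2_same_c_ne0 {h c d d' : ℝ} (H : Adm2 β a₁ a₂ h c d)
    (H' : Adm2 β a₁ a₂ h c d') (hc : c = a₁ ∨ c = a₂) (h1 : h < a₁) : d = d' := by
  obtain ⟨A0, A1, A2⟩ := adm2_dfacts hC H
  obtain ⟨B0, B1, B2⟩ := adm2_dfacts hC H'
  have ht := t_le hC hc h1
  have hq := hC.hq12
  rcases H.2.1 with hd | hd | hd <;> rcases H'.2.1 with hd' | hd' | hd' <;> rw [hd, hd']
  · exact absurd (B1 hd') (by linarith [A0 hd])
  · exact absurd (B2 hd') (by linarith [A0 hd, hq])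
  · exact absurd (A1 hd) (by linarith [B0 hd'])
  · exact absurd (B2 hd') (by linarith [ht])
  · exact absurd (A2 hd) (by linarith [B0 hd', hq])
  · exact absurd (A2 hd) (by linarith [ht])

lemma adm2_same_c_d3 {h c d d' d'' : ℝ} (H : Adm2 β a₁ a₂ h c d)
    (H' : Adm2 β a₁ a₂ h c d') (H'' : Adm2 β a₁ a₂ h c d'') :
    d = d' ∨ d = d'' ∨ d' = d'' := by
  obtain ⟨A0, A1, A2⟩ := adm2_dfacts hC H
  obtain ⟨B0, B1, B2⟩ := adm2_dfacts hC H'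
  obtain ⟨C0, C1, C2⟩ := adm2_dfacts hC H''
  have hq := hC.hq12
  by_cases hgt : a₁ / β < β * (min h (RR β a₁ a₂ c) - LL β a₁ a₂ c)
  · -- every admissible d lies in {a₁, a₂}
    have hd : d = a₁ ∨ d = a₂ := by
      rcases H.2.1 with hd | hd | hd
      · exact absurd (A0 hd) (by linarith)
      · exact Or.inl hd
      · exact Or.inr hd
    have hd' : d' = a₁ ∨ d' = a₂ := by
      rcases H'.2.1 with hd' | hd' | hd'
      · exact absurd (B0 hd') (by linarith)
      · exact Or.inl hd'
      · exact Or.inr hd'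
    have hd'' : d'' = a₁ ∨ d'' = a₂ := by
      rcases H''.2.1 with hd'' | hd'' | hd''
      · exact absurd (C0 hd'') (by linarith)
      · exact Or.inl hd''
      · exact Or.inr hd''
    exact pigeon3 hd hd' hd''
  · -- every admissible d is 0
    push_neg at hgt
    have hd : d = 0 := by
      rcases H.2.1 with hd | hd | hd
      · exact hd
      · exact absurd (A1 hd) (by linarith)
      · exact absurd (A2 hd) (by linarith)
    have hd' : d' = 0 := by
      rcases H'.2.1 with hd' | hd' | hd'
      · exact hd'
      · exact absurd (B1 hd') (by linarith)
      · exact absurd (B2 hd') (by linarith)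
    exact Or.inl (hd.trans hd'.symm)

lemma adm2_triple {h c d c' d' c'' d'' : ℝ} (h1 : h < a₁)
    (H : Adm2 β a₁ a₂ h c d) (H' : Adm2 β a₁ a₂ h c' d')
    (H'' : Adm2 β a₁ a₂ h c'' d'') :
    (c = c' ∧ d = d') ∨ (c = c'' ∧ d = d'') ∨ (c' = c'' ∧ d' = d'') := by
  obtain ⟨A0, A1, A2⟩ := adm2_cfacts hC H
  obtain ⟨B0, B1, B2⟩ := adm2_cfacts hC H'
  obtain ⟨C0, C1, C2⟩ := adm2_cfacts hC H''
  have hq := hC.hq12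
  by_cases hlow : h < a₁ / β
  · have hc : c = 0 := by
      rcases H.1 with hc | hc | hc
      · exact hc
      · exact absurd (A1 hc) (by linarith)
      · exact absurd (A2 hc) (by linarith)
    have hc' : c' = 0 := by
      rcases H'.1 with hc' | hc' | hc'
      · exact hc'
      · exact absurd (B1 hc') (by linarith)
      · exact absurd (B2 hc') (by linarith)
    have hc'' : c'' = 0 := by
      rcases H''.1 with hc'' | hc'' | hc''
      · exact hc''
      · exact absurd (C1 hc'') (by linarith)
      · exact absurd (C2 hc'') (by linarith)
    rw [hc] at H; rw [hc'] at H'; rw [hc''] at H''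
    rcases adm2_same_c_d3 hC H H' H'' with hd | hd | hd
    · exact Or.inl ⟨hc.trans hc'.symm, hd⟩
    · exact Or.inr (Or.inl ⟨hc.trans hc''.symm, hd⟩)
    · exact Or.inr (Or.inr ⟨hc'.trans hc''.symm, hd⟩)
  · by_cases hhigh : a₂ / β < h
    · have hc : c = a₁ ∨ c = a₂ := by
        rcases H.1 with hc | hc | hc
        · exact absurd (A0 hc) hlow
        · exact Or.inl hc
        · exact Or.inr hc
      have hc' : c' = a₁ ∨ c' = a₂ := by
        rcases H'.1 with hc' | hc' | hc'
        · exact absurd (B0 hc') hlow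
        · exact Or.inl hc'
        · exact Or.inr hc'
      have hc'' : c'' = a₁ ∨ c'' = a₂ := by
        rcases H''.1 with hc'' | hc'' | hc''
        · exact absurd (C0 hc'') hlow
        · exact Or.inl hc''
        · exact Or.inr hc''
      rcases pigeon3 hc hc' hc'' with he | he | he
      · rw [← he] at H'
        exact Or.inl ⟨he, adm2_same_c_ne0 hC H H' hc h1⟩
      · rw [← he] at H''
        exact Or.inr (Or.inl ⟨he, adm2_same_c_ne0 hC H H'' hc h1⟩)
      · rw [← he] at H''
        exact Or.inr (Or.inr ⟨he, adm2_same_c_ne0 hC H' H'' hc' h1⟩)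
    · push_neg at hhigh
      have hc : c = a₁ := by
        rcases H.1 with hc | hc | hc
        · exact absurd (A0 hc) hlow
        · exact hc
        · exact absurd (A2 hc) (by linarith)
      have hc' : c' = a₁ := by
        rcases H'.1 with hc' | hc' | hc'
        · exact absurd (B0 hc') hlow
        · exact hc'
        · exact absurd (B2 hc') (by linarith)
      rw [hc] at H; rw [hc'] at H'
      exact Or.inl ⟨hc.trans hc'.symm,
        adm2_same_c_ne0 hC H H' (Or.inl rfl) h1⟩

end Real

section Plumbing
variable {β a₁ a₂ : ℝ}

lemma memB_take {n k : ℕ} {w : List ℝ} (hn : 1 ≤ n) (hk : 1 ≤ k)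
    (hw : memB β a₁ a₂ (n + k) w) : memB β a₁ a₂ n (w.take n) := by
  obtain ⟨hlen, hword, hpos, hnf, hpre⟩ := hw
  have hlen' : (w.take n).length = n := by rw [List.length_take, hlen]; omega
  refine ⟨hlen', fun b hb => hword b (List.mem_of_mem_take hb),
    lt_of_lt_of_le hpos (measure_mono (cyl_take_subset w n)), ?_, ?_⟩
  · apply hpre
    · intro h
      rw [h] at hlen'
      simp at hlen'
      omega
    · exact List.take_prefix n w
    · intro h
      have := congrArg List.length h
      rw [hlen', hlen] at this
      omega
  · intro w' hne hp hne'
    apply hpre w' hne (hp.trans (List.take_prefix n w))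
    intro h
    have := hp.length_le
    rw [hlen', h, hlen] at this
    omega

lemma finite_words (a₁ a₂ : ℝ) :
    ∀ m : ℕ, {l : List ℝ | l.length = m ∧ isWord a₁ a₂ l}.Finite := by
  intro m
  induction m with
  | zero =>
    apply Set.Finite.subset (Set.finite_singleton ([] : List ℝ))
    rintro l ⟨h, -⟩
    simp [List.length_eq_zero_iff.mp h]
  | succ m IH =>
    apply Set.Finite.subset
      (Set.Finite.image (fun p : ℝ × List ℝ => p.1 :: p.2)
        ((Set.toFinite ({0, a₁, a₂} : Set ℝ)).prod IH))
    rintro l ⟨hlen, hword⟩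
    match l with
    | [] => simp at hlen
    | b :: l' =>
      refine ⟨(b, l'), ⟨?_, ?_, ?_⟩, rfl⟩
      · have := hword b (by simp)
        simpa using this
      · simpa using hlen
      · exact fun x hx => hword x (by simp [hx])

lemma finite_memB (n : ℕ) : {w | memB β a₁ a₂ n w}.Finite :=
  (finite_words a₁ a₂ n).subset (fun w hw => ⟨hw.1, hw.2.1⟩)

lemma ncard_le_two_mul {α γ : Type*} {s : Set α} {t : Set γ} (hs : s.Finite)
    (ht : t.Finite) (f : α → γ) (himg : ∀ x ∈ s, f x ∈ t)
    (hfib : ∀ y : γ, ({x ∈ s | f x = y}).ncard ≤ 2) : s.ncard ≤ 2 * t.ncard := by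
  classical
  rw [Set.ncard_eq_toFinset_card s hs, Set.ncard_eq_toFinset_card t ht]
  have hmain := Finset.card_le_mul_card_image (f := f) hs.toFinset 2 ?_
  · refine le_trans hmain (Nat.mul_le_mul_left 2 (Finset.card_le_card ?_))
    intro y hy
    rw [Finset.mem_image] at hy
    obtain ⟨x, hx, rfl⟩ := hy
    rw [Set.Finite.mem_toFinset] at hx ⊢
    exact himg x hx
  · intro b _
    have hco : ((hs.toFinset.filter (fun a => f a = b)) : Set α) = {x ∈ s | f x = b} := by
      ext x
      simp [Set.Finite.mem_toFinset]
    calc (hs.toFinset.filter (fun a => f a = b)).card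
        = ((hs.toFinset.filter (fun a => f a = b)) : Set α).ncard :=
          (Set.ncard_coe_finset _).symm
      _ = ({x ∈ s | f x = b}).ncard := by rw [hco]
      _ ≤ 2 := hfib b

lemma decomp2 {n : ℕ} {w u : List ℝ} (hlen : w.length = n + 2)
    (htake : w.take n = u) : ∃ c d : ℝ, w = u ++ [c, d] := by
  have hdl : (w.drop n).length = 2 := by rw [List.length_drop, hlen]; omega
  obtain ⟨c, d, hcd⟩ := List.length_eq_two.mp hdl
  exact ⟨c, d, by rw [← htake, ← hcd, List.take_append_drop]⟩

lemma decomp1 {n : ℕ} {w u : List ℝ} (hlen : w.length = n + 1)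
    (htake : w.take n = u) : ∃ c : ℝ, w = u ++ [c] := by
  have hdl : (w.drop n).length = 1 := by rw [List.length_drop, hlen]; omega
  obtain ⟨c, hcd⟩ := List.length_eq_one_iff.mp hdl
  exact ⟨c, by rw [← htake, ← hcd, List.take_append_drop]⟩

end Plumbing

section Fibers
variable {β a₁ a₂ : ℝ} (hC : Ctx β a₁ a₂)
include hC

/-- facts about the "height" of a word in `Bₙ` -/
lemma height_facts {u : List ℝ} {l r : ℝ} {n : ℕ} (hn : u.length = n)
    (hu : memB β a₁ a₂ n u) (hcyl : cyl β a₁ a₂ u = Ico l r)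
    (hht : β ^ u.length * (r - l) ≤ a₁) :
    β ^ n * (r - l) < a₁ := by
  rw [hn] at hht
  rcases lt_or_eq_of_le hht with h | h
  · exact h
  · exfalso
    apply hu.2.2.2.1
    unfold isFull
    rw [hcyl, Real.volume_Ico, hu.1]
    congr 1
    have hpow : (0:ℝ) < β ^ n := pow_pos hC.hβ0 n
    field_simp
    linarith [h]

lemma fiber_two {n : ℕ} (hn : 1 ≤ n) (y : List ℝ) :
    ({w ∈ {w | memB β a₁ a₂ (n+2) w} | w.take n = y}).ncard ≤ 2 := by
  by_contra hcon
  push_neg at hcon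
  have hfin : ({w ∈ {w | memB β a₁ a₂ (n+2) w} | w.take n = y}).Finite :=
    (finite_memB (n+2)).subset (fun w hw => hw.1)
  rw [Set.two_lt_ncard hfin] at hcon
  obtain ⟨w1, hw1, w2, hw2, w3, hw3, h12, h13, h23⟩ := hcon
  obtain ⟨hm1, ht1⟩ := hw1
  obtain ⟨hm2, ht2⟩ := hw2
  obtain ⟨hm3, ht3⟩ := hw3
  simp only [Set.mem_setOf_eq] at hm1 hm2 hm3
  -- the common prefix
  have hu : memB β a₁ a₂ n y := by
    have := memB_take hn (by norm_num : 1 ≤ 2) hm1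
    rwa [ht1] at this
  have hune : y ≠ [] := by
    intro h
    rw [h] at hu
    have := hu.1
    simp at this
    omega
  obtain ⟨l, r, hcyl, hht, haff⟩ := exists_good hC y hune hu.2.1
  have hylen : y.length = n := hu.1
  have hh1 : β ^ n * (r - l) < a₁ := height_facts hC hylen hu hcyl hht
  -- decompose the three words
  obtain ⟨c1, d1, he1⟩ := decomp2 hm1.1 ht1
  obtain ⟨c2, d2, he2⟩ := decomp2 hm2.1 ht2
  obtain ⟨c3, d3, he3⟩ := decomp2 hm3.1 ht3
  have main : ∀ w c d, memB β a₁ a₂ (n+2) w → w = y ++ [c, d] →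
      Adm2 β a₁ a₂ (β ^ n * (r - l)) c d := by
    intro w c d hm he
    have hcA : c = 0 ∨ c = a₁ ∨ c = a₂ := hm.2.1 c (by rw [he]; simp)
    have hdA : d = 0 ∨ d = a₁ ∨ d = a₂ := hm.2.1 d (by rw [he]; simp)
    have hnfc : ¬ isFull β a₁ a₂ (y ++ [c]) := by
      apply hm.2.2.2.2
      · simp
      · rw [he]
        exact ⟨[d], by simp⟩
      · intro hh
        have := congrArg List.length hh
        rw [hm.1] at this
        simp [hylen] at this
    have hpos : 0 < volume (cyl β a₁ a₂ (y ++ [c, d])) := by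
      rw [← he]; exact hm.2.2.1
    have hnf : ¬ isFull β a₁ a₂ (y ++ [c, d]) := by
      rw [← he]; exact hm.2.2.2.1
    obtain ⟨e1, e2, e3⟩ := extract_two hC hylen hcyl haff hcA hdA hnfc hpos hnf
    exact ⟨hcA, hdA, e1, e2, e3⟩
  have H1 := main w1 c1 d1 hm1 he1
  have H2 := main w2 c2 d2 hm2 he2
  have H3 := main w3 c3 d3 hm3 he3
  rcases adm2_triple hC hh1 H1 H2 H3 with ⟨e, f⟩ | ⟨e, f⟩ | ⟨e, f⟩
  · exact h12 (by rw [he1, he2, e, f])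
  · exact h13 (by rw [he1, he3, e, f])
  · exact h23 (by rw [he2, he3, e, f])

lemma fiber_one {n : ℕ} (hn : 1 ≤ n) (y : List ℝ) :
    ({w ∈ {w | memB β a₁ a₂ (n+1) w} | w.take n = y}).ncard ≤ 2 := by
  by_contra hcon
  push_neg at hcon
  have hfin : ({w ∈ {w | memB β a₁ a₂ (n+1) w} | w.take n = y}).Finite :=
    (finite_memB (n+1)).subset (fun w hw => hw.1)
  rw [Set.two_lt_ncard hfin] at hcon
  obtain ⟨w1, hw1, w2, hw2, w3, hw3, h12, h13, h23⟩ := hcon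
  obtain ⟨hm1, ht1⟩ := hw1
  obtain ⟨hm2, ht2⟩ := hw2
  obtain ⟨hm3, ht3⟩ := hw3
  simp only [Set.mem_setOf_eq] at hm1 hm2 hm3
  have hu : memB β a₁ a₂ n y := by
    have := memB_take hn (by norm_num : 1 ≤ 1) hm1
    rwa [ht1] at this
  have hune : y ≠ [] := by
    intro h
    rw [h] at hu
    have := hu.1
    simp at this
    omega
  obtain ⟨l, r, hcyl, hht, haff⟩ := exists_good hC y hune hu.2.1
  have hylen : y.length = n := hu.1
  obtain ⟨c1, he1⟩ := decomp1 hm1.1 ht1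
  obtain ⟨c2, he2⟩ := decomp1 hm2.1 ht2
  obtain ⟨c3, he3⟩ := decomp1 hm3.1 ht3
  have main : ∀ w c, memB β a₁ a₂ (n+1) w → w = y ++ [c] →
      (c = 0 ∨ c = a₁ ∨ c = a₂) ∧
      0 < min (β ^ n * (r - l)) (RR β a₁ a₂ c) - LL β a₁ a₂ c ∧
      min (β ^ n * (r - l)) (RR β a₁ a₂ c) - LL β a₁ a₂ c ≠ a₁ / β := by
    intro w c hm he
    have hcA : c = 0 ∨ c = a₁ ∨ c = a₂ := hm.2.1 c (by rw [he]; simp)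
    have hpos : 0 < volume (cyl β a₁ a₂ (y ++ [c])) := by
      rw [← he]; exact hm.2.2.1
    have hnfc : ¬ isFull β a₁ a₂ (y ++ [c]) := by
      rw [← he]; exact hm.2.2.2.1
    obtain ⟨e1, e2⟩ := extract_one hC hylen hcyl haff hcA hpos hnfc
    exact ⟨hcA, e1, e2⟩
  obtain ⟨A, A1, A2⟩ := main w1 c1 hm1 he1
  obtain ⟨B, B1, B2⟩ := main w2 c2 hm2 he2
  obtain ⟨C, C1, C2⟩ := main w3 c3 hm3 he3
  obtain ⟨FA0, FA1, FA2⟩ := d_facts hC A A1 A2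
  obtain ⟨FB0, FB1, FB2⟩ := d_facts hC B B1 B2
  obtain ⟨FC0, FC1, FC2⟩ := d_facts hC C C1 C2
  have hq := hC.hq12
  have key : c1 = c2 ∨ c1 = c3 ∨ c2 = c3 := by
    by_cases hlow : β ^ n * (r - l) < a₁ / β
    · have e1 : c1 = 0 := by
        rcases A with h | h | h
        · exact h
        · exact absurd (FA1 h) (by linarith)
        · exact absurd (FA2 h) (by linarith)
      have e2 : c2 = 0 := by
        rcases B with h | h | h
        · exact h
        · exact absurd (FB1 h) (by linarith)
        · exact absurd (FB2 h) (by linarith)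
      exact Or.inl (e1.trans e2.symm)
    · have e1 : c1 = a₁ ∨ c1 = a₂ := by
        rcases A with h | h | h
        · exact absurd (FA0 h) hlow
        · exact Or.inl h
        · exact Or.inr h
      have e2 : c2 = a₁ ∨ c2 = a₂ := by
        rcases B with h | h | h
        · exact absurd (FB0 h) hlow
        · exact Or.inl h
        · exact Or.inr h
      have e3 : c3 = a₁ ∨ c3 = a₂ := by
        rcases C with h | h | h
        · exact absurd (FC0 h) hlow
        · exact Or.inl h
        · exact Or.inr h
      exact pigeon3 e1 e2 e3
  rcases key with e | e | e
  · exact h12 (by rw [he1, he2, e])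
  · exact h13 (by rw [he1, he3, e])
  · exact h23 (by rw [he2, he3, e])

lemma kappa_step2 {n : ℕ} (hn : 1 ≤ n) :
    kappa β a₁ a₂ (n + 2) ≤ 2 * kappa β a₁ a₂ n := by
  apply ncard_le_two_mul (finite_memB (n+2)) (finite_memB n) (List.take n)
  · intro w hw
    have := memB_take hn (by norm_num : 1 ≤ 2) hw
    exact this
  · exact fun y => fiber_two hC hn y

lemma kappa_step1 {n : ℕ} (hn : 1 ≤ n) :
    kappa β a₁ a₂ (n + 1) ≤ 2 * kappa β a₁ a₂ n := by
  apply ncard_le_two_mul (finite_memB (n+1)) (finite_memB n) (List.take n)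
  · intro w hw
    have := memB_take hn (by norm_num : 1 ≤ 1) hw
    exact this
  · exact fun y => fiber_one hC hn y

lemma kappa_one : kappa β a₁ a₂ 1 ≤ 2 := by
  have hsub : {w | memB β a₁ a₂ 1 w} ⊆ {[a₁], [a₂]} := by
    intro w hw
    obtain ⟨b, hb⟩ := List.length_eq_one_iff.mp hw.1
    have hbA : b = 0 ∨ b = a₁ ∨ b = a₂ := hw.2.1 b (by rw [hb]; simp)
    rcases hbA with h | h | h
    · exfalso
      apply hw.2.2.2.1
      unfold isFull
      rw [hb, h, cyl_single, dg0, Real.volume_Ico]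
      simp
    · rw [hb, h]; exact Or.inl rfl
    · rw [hb, h]; exact Or.inr rfl
  calc kappa β a₁ a₂ 1 ≤ ({[a₁], [a₂]} : Set (List ℝ)).ncard :=
        Set.ncard_le_ncard hsub (Set.toFinite _)
    _ ≤ 2 := by
        apply le_trans (Set.ncard_insert_le _ _)
        simp

end Fibers


/-- If moreover `1 < β ≤ G` where `G = (1+√5)/2` is the golden
mean, then for every `n ≥ 1` one has `κ(n) ≤ 2^(⌊n/2⌋+1)`. -/
theorem stmt7 (β a₁ a₂ : ℝ) (hβ1 : 1 < β) (hβ3 : β < 3)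
    (hβG : β ≤ (1 + Real.sqrt 5) / 2)
    (ha₁ : 0 < a₁) (h12 : a₁ < a₂) (hc : condition6 β a₁ a₂) :
    ∀ n : ℕ, 1 ≤ n → kappa β a₁ a₂ n ≤ 2 ^ (n / 2 + 1) := by
  obtain ⟨hc1, hc2⟩ := hc
  have hs5 : Real.sqrt 5 ^ 2 = 5 := Real.sq_sqrt (by norm_num)
  have hs0 : 0 ≤ Real.sqrt 5 := Real.sqrt_nonneg 5
  have hβ2 : β < 2 := by nlinarith [sq_nonneg (Real.sqrt 5 - 3)]
  have gold : β ^ 2 ≤ β + 1 := by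
    nlinarith [mul_nonneg (sub_nonneg.mpr hβG)
      (by linarith : (0:ℝ) ≤ β - (1 - Real.sqrt 5) / 2)]
  have hba : a₂ < β * a₁ := by
    have h := mul_le_mul_of_nonneg_left (min_le_right 2 β) ha₁.le
    calc a₂ < a₁ * min 2 β := hc2
      _ ≤ a₁ * β := h
      _ = β * a₁ := mul_comm _ _
  have h2a : a₂ < 2 * a₁ := by
    have h := mul_le_mul_of_nonneg_left (min_le_left 2 β) ha₁.le
    have := hc2
    nlinarith
  have hm : a₁ * (β - 1) < a₂ := by
    have h := mul_le_mul_of_nonneg_left (le_max_left (β - 1) 1) ha₁.le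
    linarith
  have hCtx : Ctx β a₁ a₂ := ⟨hβ1, hβ2, gold, ha₁, h12, hba, h2a, hm⟩
  intro n
  induction n using Nat.strong_induction_on with
  | _ n IH =>
    intro hn
    cases n with
    | zero => omega
    | succ n =>
      cases n with
      | zero =>
        exact le_trans (kappa_one hCtx) (by norm_num)
      | succ m =>
        rcases Nat.eq_zero_or_pos m with rfl | hm1
        · have h1 := kappa_step1 hCtx (le_refl 1)
          have h2 := kappa_one hCtx
          calc kappa β a₁ a₂ 2 ≤ 2 * kappa β a₁ a₂ 1 := h1
            _ ≤ 2 * 2 := by omega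
            _ = 2 ^ (2 / 2 + 1) := by norm_num
        · have h1 := kappa_step2 hCtx hm1
          have h2 := IH m (by omega) hm1
          have hexp : (m + 2) / 2 + 1 = m / 2 + 2 := by omega
          calc kappa β a₁ a₂ (m + 2) ≤ 2 * kappa β a₁ a₂ m := h1
            _ ≤ 2 * 2 ^ (m / 2 + 1) := by omega
            _ = 2 ^ (m / 2 + 2) := by ring
            _ = 2 ^ ((m + 2) / 2 + 1) := by rw [hexp]
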